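/- Every automorphism of the free group F_n on n generators can be written as a finite composition of elementary Nielsen transformations (permutations of generators, inversion of a generator, and replacing a generator x_i by x_i·x_j for j ≠ i). -/

import Mathlib

open List

namespace NielsenProof

variable {α : Type*} [DecidableEq α]

/-- adjacent-admissibility relation: `a` may be followed by `b`. -/
def Adm (a b : α × Bool) : Prop := ¬(a.1 = b.1 ∧ a.2 = !b.2)

instance : DecidableRel (Adm (α := α)) := fun a b => by unfold Adm; infer_instance

/-- a word is reduced iff adjacent letters are admissible -/
def Reduced (L : List (α × Bool)) : Prop := List.Chain' Adm L

theorem reduced_reduce (L : List (α × Bool)) : Reduced (FreeGroup.reduce L) := by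
  induction L with
  | nil => simp [Reduced, List.Chain', List.isChain_nil]
  | cons x L ih =>
    rw [FreeGroup.reduce.cons]
    rcases h : FreeGroup.reduce L with _ | ⟨hd, tl⟩
    · simp [Reduced, List.Chain', List.isChain_singleton]
    · rw [h] at ih
      by_cases hc : x.1 = hd.1 ∧ x.2 = !hd.2
      · simp only [hc, if_true]
        exact ih.tail
      · simp only [hc, if_false]
        exact ih.cons (fun y hy => by cases hy; exact hc)

theorem reduce_eq_self_of_reduced {L : List (α × Bool)} (h : Reduced L) :
    FreeGroup.reduce L = L := by
  induction L with
  | nil => rfl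
  | cons x L ih =>
    have hL : Reduced L := h.tail
    rw [FreeGroup.reduce.cons, ih hL]
    rcases L with _ | ⟨hd, tl⟩
    · rfl
    · have : Adm x hd := (List.isChain_cons_cons.mp h).1
      simp only [Adm] at this
      simp [this]

theorem reduced_toWord (x : FreeGroup α) : Reduced x.toWord := by
  have := reduced_reduce (x.toWord)
  rwa [FreeGroup.reduce_toWord] at this

end NielsenProof

namespace NielsenProof

open FreeGroup

variable {α : Type*} [DecidableEq α]

theorem invRev_append (L₁ L₂ : List (α × Bool)) :
    invRev (L₁ ++ L₂) = invRev L₂ ++ invRev L₁ := by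
  simp [invRev]

theorem invRev_singleton (a : α × Bool) : invRev [a] = [(a.1, !a.2)] := by
  simp [invRev]

theorem invRev_cons (a : α × Bool) (L : List (α × Bool)) :
    invRev (a :: L) = invRev L ++ [(a.1, !a.2)] := by
  simp [invRev]

theorem reduced_append_of_adm {P Q : List (α × Bool)} (hP : Reduced P) (hQ : Reduced Q)
    (h : ∀ x ∈ P.getLast?, ∀ y ∈ Q.head?, Adm x y) : Reduced (P ++ Q) :=
  List.isChain_append.2 ⟨hP, hQ, h⟩

theorem not_reduced_pair {X Y : List (α × Bool)} (a : α × Bool) :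
    ¬ Reduced (X ++ a :: (a.1, !a.2) :: Y) := by
  intro h
  have : Reduced [a, (a.1, !a.2)] :=
    h.infix ⟨X, Y, by simp⟩
  have := (List.isChain_cons_cons.mp this).1
  simp [Adm] at this

/-- maximal cancellation decomposition for the concatenation of two reduced words -/
theorem cancel_word (P : List (α × Bool)) : ∀ Q, Reduced P → Reduced Q →
    ∃ a b c, P = a ++ b ∧ Q = invRev b ++ c ∧ FreeGroup.reduce (P ++ Q) = a ++ c := by
  induction P using List.reverseRecOn with
  | nil =>
    intro Q _ hQ
    exact ⟨[], [], Q, by simp, by simp [invRev], by simpa using reduce_eq_self_of_reduced hQ⟩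
  | append_singleton P' t ih =>
    intro Q hP hQ
    rcases Q with _ | ⟨s, Q'⟩
    · refine ⟨P' ++ [t], [], [], by simp, by simp [invRev], ?_⟩
      simpa using reduce_eq_self_of_reduced hP
    by_cases hc : s = (t.1, !t.2)
    · subst hc
      have hstep : FreeGroup.Red.Step (P' ++ [t] ++ (t.1, !t.2) :: Q') (P' ++ Q') := by
        have := @FreeGroup.Red.Step.not_rev α P' Q' t.1 (!t.2)
        simpa using this
      have hred : FreeGroup.reduce (P' ++ [t] ++ (t.1, !t.2) :: Q')
          = FreeGroup.reduce (P' ++ Q') := FreeGroup.reduce.Step.eq hstep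
      obtain ⟨a, b, c, h1, h2, h3⟩ := ih Q' (hP.prefix ⟨[t], by simp⟩) (hQ.tail)
      refine ⟨a, b ++ [t], c, by simp [h1], ?_, ?_⟩
      · rw [invRev_append, invRev_singleton]
        simp [h2]
      · rw [hred, h3]
    · refine ⟨P' ++ [t], [], s :: Q', by simp, by simp [invRev], ?_⟩
      have : Reduced ((P' ++ [t]) ++ s :: Q') := by
        refine reduced_append_of_adm hP hQ ?_
        intro x hx y hy
        simp at hx hy
        subst hx; subst hy
        intro ⟨h1, h2⟩
        apply hc
        have : s = (s.1, s.2) := rfl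
        rw [this, ← h1, h2]
        simp
      simpa using reduce_eq_self_of_reduced this

/-- maximal cancellation decomposition for a product in the free group -/
theorem cancel (x y : FreeGroup α) :
    ∃ a b c, x.toWord = a ++ b ∧ y.toWord = invRev b ++ c ∧ (x * y).toWord = a ++ c := by
  obtain ⟨a, b, c, h1, h2, h3⟩ :=
    cancel_word x.toWord y.toWord (reduced_toWord x) (reduced_toWord y)
  refine ⟨a, b, c, h1, h2, ?_⟩
  have : x * y = FreeGroup.mk (x.toWord ++ y.toWord) := by
    rw [← FreeGroup.mul_mk, FreeGroup.mk_toWord, FreeGroup.mk_toWord]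
  rw [this, FreeGroup.toWord_mk, h3]

theorem prefix_suffix_overlap {β : Type*} {X p s : List β} (hp : p <+: X) (hs : s <:+ X)
    (h : X.length ≤ p.length + s.length) :
    ∃ x y z, X = x ++ y ++ z ∧ p = x ++ y ∧ s = y ++ z ∧
      y.length + X.length = p.length + s.length := by
  have hpl : p.length ≤ X.length := hp.length_le
  have hsl : s.length ≤ X.length := hs.length_le
  have hpt : p = X.take p.length := List.prefix_iff_eq_take.mp hp
  have hst : s = X.drop (X.length - s.length) := List.suffix_iff_eq_drop.mp hs
  set k := X.length - s.length with hk
  have hkp : k ≤ p.length := by omega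
  refine ⟨X.take k, (X.take p.length).drop k, X.drop p.length, ?_, ?_, ?_, ?_⟩
  · have h2 : X.take k ++ (X.take p.length).drop k = X.take p.length := by
      have : X.take k = (X.take p.length).take k := by
        rw [List.take_take, min_eq_left hkp]
      rw [this, List.take_append_drop]
    rw [h2, List.take_append_drop]
  · conv_lhs => rw [hpt]
    have : X.take k = (X.take p.length).take k := by
      rw [List.take_take, min_eq_left hkp]
    rw [this, List.take_append_drop]
  · conv_lhs => rw [hst, ← List.take_append_drop p.length X]
    rw [List.drop_append]
    have hlen : (X.take p.length).length = p.length := by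
      rw [List.length_take, min_eq_left hpl]
    rw [hlen, show k - p.length = 0 by omega, List.drop_zero]
  · simp only [List.length_drop, List.length_take, min_eq_left hpl]
    omega

theorem reduced_ne_invRev : ∀ m (y : List (α × Bool)), y.length ≤ m → Reduced y → y ≠ [] →
    invRev y ≠ y := by
  intro m
  induction m with
  | zero => intro y hy _ hne; simp [List.length_eq_zero_iff] at hy; exact absurd hy hne
  | succ m ih =>
    intro y hy hred hne heq
    rcases y with _ | ⟨a, y'⟩
    · exact hne rfl
    rcases List.eq_nil_or_concat y' with rfl | ⟨y₂, l, hy'⟩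
    · rw [invRev_singleton] at heq
      have : (a.1, !a.2) = a := by simpa using heq
      have := congrArg Prod.snd this
      simp at this
    · rw [List.concat_eq_append] at hy'
      subst hy'
      rw [invRev_cons, invRev_append, invRev_singleton] at heq
      -- heq : ((l.1,!l.2) :: invRev y₂) ++ [(a.1,!a.2)] = a :: (y₂ ++ [l])
      have hhead : (l.1, !l.2) = a := by
        have := congrArg (fun t => t.head?) heq
        simpa using this
      have htail : invRev y₂ ++ [(a.1, !a.2)] = y₂ ++ [l] := by
        have := congrArg (fun t => t.tail) heq
        simpa using this
      have hlast : (a.1, !a.2) = l := by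
        have := congrArg (fun t => t.getLast?) htail
        simpa using this
      have hmid : invRev y₂ = y₂ :=
        (List.append_inj htail (by simp [invRev])).1
      rcases List.eq_nil_or_concat y₂ with rfl | ⟨_, _, hne₂⟩
      · -- y = [a, l] with l = (a.1, !a.2)
        have : ¬ Reduced ([] ++ a :: (a.1, !a.2) :: []) := not_reduced_pair a
        simp only [List.nil_append] at this
        apply this
        have : (a :: ([] ++ [l]) : List (α × Bool)) = [a, (a.1, !a.2)] := by
          rw [← hlast]; simp
        rw [← this]
        exact hred
      · have hred₂ : Reduced y₂ := hred.infix ⟨[a], [l], by simp⟩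
        have hlen : y₂.length ≤ m := by
          have := hy
          simp [List.length_append] at this ⊢
          omega
        exact ih y₂ hlen hred₂ (by rw [hne₂]; simp) hmid

theorem norm_le_norm_mul_self (u : FreeGroup α) : u.norm ≤ (u * u).norm := by
  obtain ⟨a, b, c, h1, h2, h3⟩ := cancel u u
  set X := u.toWord with hX
  have hL : X.length = FreeGroup.norm u := rfl
  have hmul : (u * u).norm = a.length + c.length := by
    rw [FreeGroup.norm, h3, List.length_append]
  have hab : X.length = a.length + b.length := by rw [h1, List.length_append]
  have hbc : X.length = b.length + c.length := by
    rw [h2, List.length_append, FreeGroup.invRev_length]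
  -- claim 2 * b.length ≤ X.length
  by_cases hcase : 2 * b.length ≤ X.length
  · omega
  · exfalso
    have hp : invRev b <+: X := by rw [h2]; exact ⟨c, rfl⟩
    have hs : b <:+ X := by rw [h1]; exact ⟨a, rfl⟩
    have hlen : X.length ≤ (invRev b).length + b.length := by
      rw [FreeGroup.invRev_length]; omega
    obtain ⟨x, y, z, hXs, hpxy, hsyz, hylen⟩ := prefix_suffix_overlap hp hs hlen
    have hy_ne : y ≠ [] := by
      intro h0
      rw [h0] at hylen
      simp [FreeGroup.invRev_length] at hylen
      omega
    have hyred : Reduced y := (reduced_toWord u).infix ⟨x, z, by rw [← hXs]⟩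
    -- b = y ++ z and invRev b = x ++ y ⇒ b = invRev y ++ invRev x
    have hb2 : b = invRev y ++ invRev x := by
      have : invRev (invRev b) = invRev (x ++ y) := congrArg invRev hpxy
      rwa [FreeGroup.invRev_invRev, invRev_append] at this
    have hyy : invRev y = y := by
      have : y ++ z = invRev y ++ invRev x := by rw [← hsyz, hb2]
      exact ((List.append_inj this.symm (by simp [invRev])).1)
    exact reduced_ne_invRev y.length y le_rfl hyred hy_ne hyy

end NielsenProof

namespace NielsenProof

variable {β : Type*}

/-- rank of a word: base-B value of (code+1) digits -/
def rnk (c : β → ℕ) (B : ℕ) (L : List β) : ℕ :=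
  L.foldl (fun a l => a * B + (c l + 1)) 0

theorem rnk_shift (c : β → ℕ) (B : ℕ) : ∀ (L : List β) (a : ℕ),
    L.foldl (fun a l => a * B + (c l + 1)) a = a * B ^ L.length + rnk c B L := by
  intro L
  induction L with
  | nil => intro a; simp [rnk]
  | cons l L ih =>
    intro a
    simp only [List.foldl_cons, rnk, List.length_cons]
    rw [ih, ih (0 * B + (c l + 1))]
    ring

theorem rnk_cons (c : β → ℕ) (B : ℕ) (l : β) (L : List β) :
    rnk c B (l :: L) = (c l + 1) * B ^ L.length + rnk c B L := by
  simp only [rnk, List.foldl_cons]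
  rw [rnk_shift]
  simp [rnk]

theorem rnk_append (c : β → ℕ) (B : ℕ) (X Y : List β) :
    rnk c B (X ++ Y) = rnk c B X * B ^ Y.length + rnk c B Y := by
  simp only [rnk, List.foldl_append]
  rw [rnk_shift]
  rfl

theorem rnk_lt (c : β → ℕ) (B : ℕ) (hc : ∀ l, c l + 1 < B) :
    ∀ L : List β, rnk c B L < B ^ L.length := by
  intro L
  induction L with
  | nil => simp [rnk]
  | cons l L ih =>
    rw [rnk_cons, List.length_cons, pow_succ]
    have h1 : c l + 2 ≤ B := hc l
    calc (c l + 1) * B ^ L.length + rnk c B L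
        < (c l + 1) * B ^ L.length + B ^ L.length := by omega
      _ = (c l + 2) * B ^ L.length := by ring
      _ ≤ B ^ L.length * B := by rw [mul_comm]; exact Nat.mul_le_mul_left _ h1

theorem digit_unique {Q a a' r r' : ℕ} (hr : r < Q) (hr' : r' < Q)
    (h : a * Q + r = a' * Q + r') : a = a' ∧ r = r' := by
  have hq : 0 < Q := by omega
  have h' : r + a * Q = r' + a' * Q := by omega
  have h1 : (r + a * Q) % Q = r := by
    rw [Nat.add_mul_mod_self_right, Nat.mod_eq_of_lt hr]
  have h2 : (r' + a' * Q) % Q = r' := by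
    rw [Nat.add_mul_mod_self_right, Nat.mod_eq_of_lt hr']
  have hrr : r = r' := by rw [← h1, ← h2, h']
  refine ⟨?_, hrr⟩
  have h3 : a * Q = a' * Q := by omega
  exact Nat.eq_of_mul_eq_mul_right hq h3

theorem rnk_inj (c : β → ℕ) (B : ℕ) (hc : ∀ l, c l + 1 < B) (hinj : Function.Injective c) :
    ∀ X Y : List β, X.length = Y.length → rnk c B X = rnk c B Y → X = Y := by
  intro X
  induction X with
  | nil => intro Y h _; exact (List.length_eq_zero_iff.mp h.symm).symm ▸ rfl
  | cons x X ih =>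
    intro Y hlen hr
    rcases Y with _ | ⟨y, Y⟩
    · simp at hlen
    simp only [List.length_cons, Nat.succ_inj] at hlen
    rw [rnk_cons, rnk_cons, hlen] at hr
    obtain ⟨h1, h2⟩ := digit_unique (rnk_lt c B hc X |>.trans_eq (by rw [hlen]))
      (rnk_lt c B hc Y) hr
    have hx : x = y := hinj (by omega)
    rw [hx, ih Y hlen h2]

theorem rnk_append_le (c : β → ℕ) (B : ℕ) (hB : 0 < B)
    {X Y e : List β} (hXY : X.length = Y.length)
    (h : rnk c B (X ++ e) ≤ rnk c B (Y ++ e)) : rnk c B X ≤ rnk c B Y := by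
  rw [rnk_append, rnk_append] at h
  have hK : 0 < B ^ e.length := Nat.pow_pos hB
  have h2 : rnk c B X * B ^ e.length ≤ rnk c B Y * B ^ e.length := by omega
  exact Nat.le_of_mul_le_mul_right h2 hK

end NielsenProof

/-- An elementary Nielsen transformation of the free group on `Fin n`:
either a permutation (swap) of two generators, inversion of one generator,
or multiplication of one generator by another. -/
def IsElementaryNielsen {n : ℕ} (φ : MulAut (FreeGroup (Fin n))) : Prop :=
  (∃ i j : Fin n, ∀ k, φ (FreeGroup.of k) = FreeGroup.of (Equiv.swap i j k)) ∨
  (∃ i : Fin n, ∀ k, φ (FreeGroup.of k) =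
      if k = i then (FreeGroup.of i)⁻¹ else FreeGroup.of k) ∨
  (∃ i j : Fin n, i ≠ j ∧ ∀ k, φ (FreeGroup.of k) =
      if k = i then FreeGroup.of i * FreeGroup.of j else FreeGroup.of k)

namespace NielsenProof

open FreeGroup

variable {n : ℕ}

/-- signed element: `bp x true = x`, `bp x false = x⁻¹` -/
def bp {M : Type*} [Group M] (x : M) (s : Bool) : M := cond s x x⁻¹

@[simp] theorem bp_true {M : Type*} [Group M] (x : M) : bp x true = x := rfl
@[simp] theorem bp_false {M : Type*} [Group M] (x : M) : bp x false = x⁻¹ := rfl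

theorem bp_inv {M : Type*} [Group M] (x : M) (s : Bool) : (bp x s)⁻¹ = bp x (!s) := by
  cases s <;> simp

theorem map_bp {M N : Type*} [Group M] [Group N] (f : M ≃* N) (x : M) (s : Bool) :
    f (bp x s) = bp (f x) s := by
  cases s <;> simp

/-- the closure of the set of elementary Nielsen transformations -/
def G (n : ℕ) : Subgroup (MulAut (FreeGroup (Fin n))) :=
  Subgroup.closure {ψ : MulAut (FreeGroup (Fin n)) | IsElementaryNielsen ψ}

theorem mulAut_ext {Φ Ψ : MulAut (FreeGroup (Fin n))}
    (h : ∀ i, Φ (FreeGroup.of i) = Ψ (FreeGroup.of i)) : Φ = Ψ := by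
  have h2 : (Φ : FreeGroup (Fin n) →* FreeGroup (Fin n))
      = (Ψ : FreeGroup (Fin n) →* FreeGroup (Fin n)) := FreeGroup.ext_hom _ _ h
  ext x
  exact DFunLike.congr_fun h2 x

/-- build an automorphism of the free group from generator images plus inverse data -/
def mkAut (f g : Fin n → FreeGroup (Fin n))
    (hgf : ∀ i, FreeGroup.lift g (f i) = FreeGroup.of i)
    (hfg : ∀ i, FreeGroup.lift f (g i) = FreeGroup.of i) :
    MulAut (FreeGroup (Fin n)) where
  toFun := FreeGroup.lift f
  invFun := FreeGroup.lift g
  left_inv := by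
    intro x
    have : (FreeGroup.lift g).comp (FreeGroup.lift f)
        = MonoidHom.id (FreeGroup (Fin n)) := by
      apply FreeGroup.ext_hom
      intro a
      simp [hgf a]
    calc FreeGroup.lift g (FreeGroup.lift f x)
        = ((FreeGroup.lift g).comp (FreeGroup.lift f)) x := rfl
      _ = x := by rw [this]; rfl
  right_inv := by
    intro x
    have : (FreeGroup.lift f).comp (FreeGroup.lift g)
        = MonoidHom.id (FreeGroup (Fin n)) := by
      apply FreeGroup.ext_hom
      intro a
      simp [hfg a]
    calc FreeGroup.lift f (FreeGroup.lift g x)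
        = ((FreeGroup.lift f).comp (FreeGroup.lift g)) x := rfl
      _ = x := by rw [this]; rfl
  map_mul' := map_mul _

@[simp] theorem mkAut_apply_of (f g : Fin n → FreeGroup (Fin n)) (hgf hfg) (k : Fin n) :
    mkAut f g hgf hfg (FreeGroup.of k) = f k := by
  show FreeGroup.lift f (FreeGroup.of k) = f k
  simp

/-- right multiplication move: `x_i ↦ x_i · x_j^{±1}` -/
def rAut (i j : Fin n) (hij : i ≠ j) (s : Bool) : MulAut (FreeGroup (Fin n)) :=
  mkAut (fun k => if k = i then FreeGroup.of i * bp (FreeGroup.of j) s else FreeGroup.of k)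
    (fun k => if k = i then FreeGroup.of i * bp (FreeGroup.of j) (!s) else FreeGroup.of k)
    (by
      intro k
      by_cases hk : k = i
      · subst hk
        have hji : ¬ j = k := fun h => hij h.symm
        simp only [if_pos rfl]
        cases s <;> simp [hji]
      · simp [hk])
    (by
      intro k
      by_cases hk : k = i
      · subst hk
        have hji : ¬ j = k := fun h => hij h.symm
        simp only [if_pos rfl]
        cases s <;> simp [hji]
      · simp [hk])

/-- left multiplication move: `x_i ↦ x_j^{±1} · x_i` -/
def lAut (i j : Fin n) (hij : i ≠ j) (s : Bool) : MulAut (FreeGroup (Fin n)) :=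
  mkAut (fun k => if k = i then bp (FreeGroup.of j) s * FreeGroup.of i else FreeGroup.of k)
    (fun k => if k = i then bp (FreeGroup.of j) (!s) * FreeGroup.of i else FreeGroup.of k)
    (by
      intro k
      by_cases hk : k = i
      · subst hk
        have hji : ¬ j = k := fun h => hij h.symm
        simp only [if_pos rfl]
        cases s <;> simp [hji]
      · simp [hk])
    (by
      intro k
      by_cases hk : k = i
      · subst hk
        have hji : ¬ j = k := fun h => hij h.symm
        simp only [if_pos rfl]
        cases s <;> simp [hji]
      · simp [hk])

/-- inversion move: `x_i ↦ x_i⁻¹` -/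
def iAut (i : Fin n) : MulAut (FreeGroup (Fin n)) :=
  mkAut (fun k => if k = i then (FreeGroup.of i)⁻¹ else FreeGroup.of k)
    (fun k => if k = i then (FreeGroup.of i)⁻¹ else FreeGroup.of k)
    (by
      intro k
      by_cases hk : k = i
      · subst hk; simp
      · simp [hk])
    (by
      intro k
      by_cases hk : k = i
      · subst hk; simp
      · simp [hk])

@[simp] theorem rAut_apply_of (i j : Fin n) (hij : i ≠ j) (s : Bool) (k : Fin n) :
    rAut i j hij s (FreeGroup.of k)
      = if k = i then FreeGroup.of i * bp (FreeGroup.of j) s else FreeGroup.of k := by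
  simp [rAut]

@[simp] theorem lAut_apply_of (i j : Fin n) (hij : i ≠ j) (s : Bool) (k : Fin n) :
    lAut i j hij s (FreeGroup.of k)
      = if k = i then bp (FreeGroup.of j) s * FreeGroup.of i else FreeGroup.of k := by
  simp [lAut]

@[simp] theorem iAut_apply_of (i : Fin n) (k : Fin n) :
    iAut i (FreeGroup.of k)
      = if k = i then (FreeGroup.of i)⁻¹ else FreeGroup.of k := by
  simp [iAut]

theorem iAut_mem (i : Fin n) : iAut i ∈ G n := by
  apply Subgroup.subset_closure
  exact Or.inr (Or.inl ⟨i, fun k => by simp⟩)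

theorem rAut_mem (i j : Fin n) (hij : i ≠ j) (s : Bool) : rAut i j hij s ∈ G n := by
  have htrue : rAut i j hij true ∈ G n := by
    apply Subgroup.subset_closure
    exact Or.inr (Or.inr ⟨i, j, hij, fun k => by simp⟩)
  cases s
  · have h2 : rAut i j hij false = (rAut i j hij true)⁻¹ := by
      rw [eq_inv_iff_mul_eq_one]
      apply mulAut_ext
      intro k
      rw [MulAut.mul_apply]
      by_cases hk : k = i
      · subst hk
        have hji : ¬ j = k := fun h => hij h.symm
        simp [hji, mul_assoc]
      · simp [hk]
    rw [h2]
    exact inv_mem htrue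
  · exact htrue

theorem lAut_mem (i j : Fin n) (hij : i ≠ j) (s : Bool) : lAut i j hij s ∈ G n := by
  have key : lAut i j hij s = iAut i * rAut i j hij (!s) * iAut i := by
    apply mulAut_ext
    intro k
    rw [MulAut.mul_apply, MulAut.mul_apply]
    by_cases hk : k = i
    · subst hk
      have hji : ¬ j = k := fun h => hij h.symm
      simp [hji, mul_inv_rev, bp_inv, Bool.not_not, map_bp]
    · simp [hk]
  rw [key]
  exact mul_mem (mul_mem (iAut_mem i) (rAut_mem i j hij (!s))) (iAut_mem i)

end NielsenProof
namespace NielsenProof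

open FreeGroup

variable {α : Type*} [DecidableEq α]

theorem mk_cancel_middle (a s c : List (α × Bool)) :
    FreeGroup.mk (a ++ (s ++ (invRev s ++ c))) = FreeGroup.mk (a ++ c) := by
  rw [← FreeGroup.mul_mk, ← FreeGroup.mul_mk, ← FreeGroup.mul_mk, ← FreeGroup.inv_mk,
    mul_inv_cancel_left, FreeGroup.mul_mk]

theorem toWord_of_mk_length {L : List (α × Bool)} {g : FreeGroup α}
    (h : FreeGroup.mk L = g) (hl : L.length = FreeGroup.norm g) : g.toWord = L := by
  subst h
  rw [FreeGroup.toWord_mk]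
  have hsub : FreeGroup.reduce L <+ L := (FreeGroup.reduce.red (L := L)).sublist
  apply hsub.eq_of_length
  rw [← FreeGroup.toWord_mk]
  exact hl.symm

theorem suffix_eq_of_length {β : Type*} {s₁ s₂ X : List β} (h1 : s₁ <:+ X) (h2 : s₂ <:+ X)
    (h : s₁.length = s₂.length) : s₁ = s₂ := by
  rw [List.suffix_iff_eq_drop.mp h1, List.suffix_iff_eq_drop.mp h2, h]

theorem prefix_eq_of_length {β : Type*} {s₁ s₂ X : List β} (h1 : s₁ <+: X) (h2 : s₂ <+: X)
    (h : s₁.length = s₂.length) : s₁ = s₂ := by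
  rw [List.prefix_iff_eq_take.mp h1, List.prefix_iff_eq_take.mp h2, h]

theorem take_append_of_ge {β : Type*} {X Y : List β} {c : ℕ} (h : X.length ≤ c) :
    (X ++ Y).take c = X ++ Y.take (c - X.length) := by
  rw [List.take_append, List.take_of_length_le h]

theorem take_append_of_le {β : Type*} {X Y : List β} {c : ℕ} (h : c ≤ X.length) :
    (X ++ Y).take c = X.take c := by
  rw [List.take_append, Nat.sub_eq_zero_of_le h, List.take_zero,
    List.append_nil]

variable {n : ℕ}

/-- total word length of the images of the generators -/
def TT (Φ : MulAut (FreeGroup (Fin n))) : ℕ :=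
  ∑ i : Fin n, FreeGroup.norm (Φ (FreeGroup.of i))

/-- letter code -/
def code (n : ℕ) : Fin n × Bool → ℕ := fun l => 2 * (l.1 : ℕ) + l.2.toNat

theorem code_lt (l : Fin n × Bool) : code n l + 1 < 2 * n + 2 := by
  have := l.1.isLt
  rcases l with ⟨x, b⟩
  cases b <;> simp [code] <;> omega

theorem code_inj : Function.Injective (code n) := by
  rintro ⟨x, b⟩ ⟨y, c⟩ h
  simp only [code] at h
  have hx := x.isLt; have hy := y.isLt
  cases b <;> cases c <;> simp_all <;>
    [skip; skip; skip; skip] <;> first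
      | (ext; omega)
      | omega

/-- first "half" (rounded up) of the reduced word of an element -/
def HH (x : FreeGroup (Fin n)) : List (Fin n × Bool) :=
  x.toWord.take ((FreeGroup.norm x + 1) / 2)

/-- secondary measure -/
def MM (Φ : MulAut (FreeGroup (Fin n))) : ℕ :=
  ∑ i : Fin n, (rnk (code n) (2 * n + 2) (HH (Φ (FreeGroup.of i)))
    + rnk (code n) (2 * n + 2) (HH ((Φ (FreeGroup.of i))⁻¹)))

/-- the set of images of generators and their inverses -/
def Upm (Φ : MulAut (FreeGroup (Fin n))) : Set (FreeGroup (Fin n)) :=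
  {u | ∃ i : Fin n, ∃ ε : Bool, u = bp (Φ (FreeGroup.of i)) ε}

theorem Upm_inv {Φ : MulAut (FreeGroup (Fin n))} {u} (h : u ∈ Upm Φ) : u⁻¹ ∈ Upm Φ := by
  obtain ⟨i, ε, rfl⟩ := h
  exact ⟨i, !ε, (bp_inv _ _)⟩

theorem Upm_ne_one {Φ : MulAut (FreeGroup (Fin n))} {u} (h : u ∈ Upm Φ) : u ≠ 1 := by
  obtain ⟨i, ε, rfl⟩ := h
  have : Φ (FreeGroup.of i) ≠ 1 := by
    intro hc
    have : FreeGroup.of i = 1 := by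
      have := congrArg Φ.symm hc
      simpa using this
    exact FreeGroup.of_ne_one i this
  cases ε <;> simp [this]

theorem Upm_norm_pos {Φ : MulAut (FreeGroup (Fin n))} {u} (h : u ∈ Upm Φ) :
    0 < FreeGroup.norm u := by
  have := Upm_ne_one h
  have h2 : FreeGroup.norm u ≠ 0 := fun hc => this (FreeGroup.norm_eq_zero.mp hc)
  omega

theorem sum_eq_off {f g : Fin n → ℕ} (i : Fin n) (h : ∀ k, k ≠ i → f k = g k) :
    (∑ k, f k) + g i = (∑ k, g k) + f i := by
  have hf := Finset.sum_erase_add Finset.univ f (Finset.mem_univ i)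
  have hg := Finset.sum_erase_add Finset.univ g (Finset.mem_univ i)
  have he : ∑ k ∈ Finset.univ.erase i, f k = ∑ k ∈ Finset.univ.erase i, g k := by
    apply Finset.sum_congr rfl
    intro k hk
    exact h k (Finset.ne_of_mem_erase hk)
  omega

theorem exists_move (Φ : MulAut (FreeGroup (Fin n))) (i j : Fin n) (hij : i ≠ j) (ε δ : Bool) :
    ∃ ψ ∈ G n, (∀ k, k ≠ i → (Φ * ψ) (FreeGroup.of k) = Φ (FreeGroup.of k)) ∧
      ((Φ * ψ) (FreeGroup.of i) = bp (Φ (FreeGroup.of i)) ε * bp (Φ (FreeGroup.of j)) δ ∨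
       (Φ * ψ) (FreeGroup.of i) = (bp (Φ (FreeGroup.of i)) ε * bp (Φ (FreeGroup.of j)) δ)⁻¹) := by
  cases ε
  · refine ⟨lAut i j hij (!δ), lAut_mem i j hij (!δ), ?_, Or.inr ?_⟩
    · intro k hk
      rw [MulAut.mul_apply, lAut_apply_of, if_neg hk]
    · rw [MulAut.mul_apply, lAut_apply_of, if_pos rfl]
      rw [mul_inv_rev, bp_inv, _root_.map_mul, map_bp]
      simp
  · refine ⟨rAut i j hij δ, rAut_mem i j hij δ, ?_, Or.inl ?_⟩
    · intro k hk
      rw [MulAut.mul_apply, rAut_apply_of, if_neg hk]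
    · rw [MulAut.mul_apply, rAut_apply_of, if_pos rfl]
      rw [_root_.map_mul, map_bp]
      simp

/-- minimality of the total length in the orbit -/
def Min1 (Φ : MulAut (FreeGroup (Fin n))) : Prop := ∀ ψ ∈ G n, TT Φ ≤ TT (Φ * ψ)

/-- minimality of the secondary measure among total-length-minimal points -/
def Min2 (Φ : MulAut (FreeGroup (Fin n))) : Prop :=
  ∀ ψ ∈ G n, TT (Φ * ψ) = TT Φ → MM Φ ≤ MM (Φ * ψ)

theorem entry_ge {Φ : MulAut (FreeGroup (Fin n))} (h1 : Min1 Φ) {ψ} (hψ : ψ ∈ G n) (i : Fin n)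
    (hoff : ∀ k, k ≠ i → (Φ * ψ) (FreeGroup.of k) = Φ (FreeGroup.of k)) :
    FreeGroup.norm (Φ (FreeGroup.of i)) ≤ FreeGroup.norm ((Φ * ψ) (FreeGroup.of i)) := by
  have hmin := h1 ψ hψ
  have hs := sum_eq_off (f := fun k => FreeGroup.norm (Φ (FreeGroup.of k)))
    (g := fun k => FreeGroup.norm ((Φ * ψ) (FreeGroup.of k))) i
    (fun k hk => (congrArg FreeGroup.norm (hoff k hk)).symm)
  simp only [TT] at hmin
  omega

theorem nielsen_one {Φ : MulAut (FreeGroup (Fin n))} (h1 : Min1 Φ) :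
    ∀ u ∈ Upm Φ, ∀ v ∈ Upm Φ, u * v ≠ 1 →
      FreeGroup.norm u ≤ FreeGroup.norm (u * v) := by
  intro u hu v hv huv
  obtain ⟨i, ε, rfl⟩ := hu
  obtain ⟨j, δ, rfl⟩ := hv
  by_cases hij : i = j
  · subst hij
    by_cases hs : ε = δ
    · subst hs
      have : bp (Φ (FreeGroup.of i)) ε * bp (Φ (FreeGroup.of i)) ε
          = bp (Φ (FreeGroup.of i) * Φ (FreeGroup.of i)) ε := by
        cases ε <;> simp [mul_inv_rev]
      rw [this]
      cases ε
      · simp only [bp_false, FreeGroup.norm_inv_eq]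
        exact norm_le_norm_mul_self _
      · simp only [bp_true]
        exact norm_le_norm_mul_self _
    · exfalso
      apply huv
      have : δ = !ε := by cases ε <;> cases δ <;> simp_all
      rw [this, ← bp_inv, mul_inv_cancel]
  · obtain ⟨ψ, hψ, hoff, hz⟩ := exists_move Φ i j hij ε δ
    have hge := entry_ge h1 hψ i hoff
    have hnu : FreeGroup.norm (bp (Φ (FreeGroup.of i)) ε) = FreeGroup.norm (Φ (FreeGroup.of i)) := by
      cases ε <;> simp
    rcases hz with hz | hz <;> rw [hz] at hge
    · omega
    · rw [FreeGroup.norm_inv_eq] at hge; omega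

theorem nielsen_one' {Φ : MulAut (FreeGroup (Fin n))} (h1 : Min1 Φ) :
    ∀ u ∈ Upm Φ, ∀ v ∈ Upm Φ, u * v ≠ 1 →
      FreeGroup.norm v ≤ FreeGroup.norm (u * v) := by
  intro u hu v hv huv
  have := nielsen_one h1 v⁻¹ (Upm_inv hv) u⁻¹ (Upm_inv hu) (by
    intro hc
    apply huv
    have := congrArg (·⁻¹) hc
    simpa [mul_inv_rev] using this)
  rw [← mul_inv_rev, FreeGroup.norm_inv_eq, FreeGroup.norm_inv_eq] at this
  exact this

theorem matchable_bound {Φ : MulAut (FreeGroup (Fin n))} (h1 : Min1 Φ)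
    {u v : FreeGroup (Fin n)} (hu : u ∈ Upm Φ) (hv : v ∈ Upm Φ) (huv : u * v ≠ 1)
    {s : List (Fin n × Bool)} (hsu : s <:+ u.toWord) (hsv : invRev s <+: v.toWord) :
    2 * s.length ≤ FreeGroup.norm u ∧ 2 * s.length ≤ FreeGroup.norm v := by
  obtain ⟨a, ha⟩ := hsu
  obtain ⟨c, hc⟩ := hsv
  have hmul : u * v = FreeGroup.mk (a ++ (s ++ (invRev s ++ c))) := by
    rw [← FreeGroup.mk_toWord (x := u), ← FreeGroup.mk_toWord (x := v), FreeGroup.mul_mk,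
      ← ha, ← hc]
    congr 1
    simp
  have hle : FreeGroup.norm (u * v) ≤ a.length + c.length := by
    rw [hmul, mk_cancel_middle]
    calc FreeGroup.norm (FreeGroup.mk (a ++ c)) ≤ (a ++ c).length := FreeGroup.norm_mk_le
      _ = a.length + c.length := by simp
  have hnu : FreeGroup.norm u = a.length + s.length := by
    rw [FreeGroup.norm, ← ha]; simp
  have hnv : FreeGroup.norm v = s.length + c.length := by
    rw [FreeGroup.norm, ← hc]; simp [FreeGroup.invRev_length]
  have hge1 := nielsen_one h1 u hu v hv huv
  have hge2 := nielsen_one' h1 u hu v hv huv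
  omega

end NielsenProof
namespace NielsenProof

open FreeGroup

variable {n : ℕ}

theorem norm_bp (x : FreeGroup (Fin n)) (ε : Bool) :
    FreeGroup.norm (bp x ε) = FreeGroup.norm x := by
  cases ε <;> simp

theorem q_ne_invRev_p {v : FreeGroup (Fin n)} {p q : List (Fin n × Bool)}
    (hv_split : v.toWord = p ++ q) (hp_ne : p ≠ []) : q ≠ invRev p := by
  intro hq
  rcases List.eq_nil_or_concat p with h0 | ⟨p', lp, hp'⟩
  · exact hp_ne h0
  rw [List.concat_eq_append] at hp'
  subst hp'
  rw [invRev_append, invRev_singleton] at hq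
  have hred := reduced_toWord v
  rw [hv_split, hq] at hred
  have : (p' ++ [lp]) ++ ([(lp.1, !lp.2)] ++ invRev p')
      = p' ++ lp :: (lp.1, !lp.2) :: invRev p' := by simp
  rw [this] at hred
  exact not_reduced_pair lp hred

theorem no_half {Φ : MulAut (FreeGroup (Fin n))} (h1 : Min1 Φ) (h2 : Min2 Φ)
    {u v w : FreeGroup (Fin n)} {p q : List (Fin n × Bool)}
    (hu : u ∈ Upm Φ) (hv : v ∈ Upm Φ) (hw : w ∈ Upm Φ)
    (huv : u * v ≠ 1) (hvw : v * w ≠ 1)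
    (hv_split : v.toWord = p ++ q) (hpq : p.length = q.length)
    (hpu : invRev p <:+ u.toWord) (hqw : invRev q <+: w.toWord) : False := by
  -- p is nonempty
  have hm_pos : 0 < p.length := by
    rcases Nat.eq_zero_or_pos p.length with h0 | h
    · exfalso
      have hp0 : p = [] := List.length_eq_zero_iff.mp h0
      have hq0 : q = [] := List.length_eq_zero_iff.mp (by omega)
      have : v.toWord = [] := by rw [hv_split, hp0, hq0]; rfl
      exact Upm_ne_one hv (FreeGroup.toWord_eq_nil_iff.mp this)
    · exact h
  have hp_ne : p ≠ [] := by intro h0; rw [h0] at hm_pos; simp at hm_pos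
  have hq_ne : q ≠ invRev p := q_ne_invRev_p hv_split hp_ne
  -- matchable bounds
  have hb1 : 2 * p.length ≤ FreeGroup.norm u ∧ 2 * p.length ≤ FreeGroup.norm v := by
    have := matchable_bound h1 hu hv huv (s := invRev p) hpu
      (by rw [FreeGroup.invRev_invRev, hv_split]; exact ⟨q, rfl⟩)
    rwa [FreeGroup.invRev_length] at this
  have hb2 : 2 * p.length ≤ FreeGroup.norm v ∧ 2 * p.length ≤ FreeGroup.norm w := by
    have := matchable_bound h1 hv hw hvw (s := q) (by rw [hv_split]; exact ⟨p, rfl⟩) hqw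
    rwa [← hpq] at this
  -- index data
  obtain ⟨i, ε, hu_eq⟩ := hu
  obtain ⟨j, δ, hv_eq⟩ := hv
  obtain ⟨kk, ζ, hw_eq⟩ := hw
  have hij : i ≠ j := by
    rintro rfl
    have hcase : u = v ∨ u = v⁻¹ := by
      rw [hu_eq, hv_eq]
      cases ε <;> cases δ <;> simp [bp]
    rcases hcase with hc | hc
    · apply hq_ne
      apply suffix_eq_of_length (X := v.toWord) ?_ ?_ ?_
      · rw [hv_split]; exact ⟨p, rfl⟩
      · rw [← hc]; exact hpu
      · rw [FreeGroup.invRev_length, hpq]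
    · exact huv (by rw [hc, inv_mul_cancel])
  have hkj : kk ≠ j := by
    rintro rfl
    have hcase : w = v ∨ w = v⁻¹ := by
      rw [hw_eq, hv_eq]
      cases ζ <;> cases δ <;> simp [bp]
    rcases hcase with hc | hc
    · apply hq_ne
      have : invRev q = p := by
        apply prefix_eq_of_length (X := v.toWord) ?_ ?_ ?_
        · rw [← hc]; exact hqw
        · rw [hv_split]; exact ⟨q, rfl⟩
        · rw [FreeGroup.invRev_length, hpq]
      rw [← this, FreeGroup.invRev_invRev]
    · exact hvw (by rw [hc, mul_inv_cancel])
  -- word decompositions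
  obtain ⟨A, hA⟩ := hpu
  obtain ⟨C, hC⟩ := hqw
  have hnuA : FreeGroup.norm u = A.length + p.length := by
    rw [FreeGroup.norm, ← hA, List.length_append, FreeGroup.invRev_length]
  have hnwC : FreeGroup.norm w = p.length + C.length := by
    rw [FreeGroup.norm, ← hC, List.length_append, FreeGroup.invRev_length, hpq]
  have hnv : FreeGroup.norm v = p.length + q.length := by
    rw [FreeGroup.norm, hv_split, List.length_append]
  ----------------------------------------------------------------
  -- the u-side move
  ----------------------------------------------------------------
  obtain ⟨ψ, hψ, hoff, hz⟩ := exists_move Φ i j hij ε δ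
  rw [← hu_eq, ← hv_eq] at hz
  set z := (Φ * ψ) (FreeGroup.of i) with hz_def
  have huv_mk : u * v = FreeGroup.mk (A ++ q) := by
    have : u * v = FreeGroup.mk (A ++ (invRev p ++ (p ++ q))) := by
      rw [← FreeGroup.mk_toWord (x := u), ← FreeGroup.mk_toWord (x := v), FreeGroup.mul_mk,
        ← hA, hv_split]
      congr 1
      simp
    have h' := mk_cancel_middle A (invRev p) q
    rw [FreeGroup.invRev_invRev] at h'
    rw [this, h']
  have hnormz : FreeGroup.norm z = FreeGroup.norm (u * v) := by
    rcases hz with h | h <;> rw [h]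
    rw [FreeGroup.norm_inv_eq]
  have hle : FreeGroup.norm (u * v) ≤ FreeGroup.norm u := by
    calc FreeGroup.norm (u * v) ≤ (A ++ q).length := by
          rw [huv_mk]; exact FreeGroup.norm_mk_le
      _ = FreeGroup.norm u := by rw [List.length_append, hnuA, hpq]
  have hge : FreeGroup.norm u ≤ FreeGroup.norm z := by
    have h' := entry_ge h1 hψ i hoff
    rw [← hz_def] at h'
    calc FreeGroup.norm u = FreeGroup.norm (Φ (FreeGroup.of i)) := by rw [hu_eq, norm_bp]
      _ ≤ FreeGroup.norm z := h'
  have hnorm_uv : FreeGroup.norm (u * v) = FreeGroup.norm u := by omega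
  have htoword_uv : (u * v).toWord = A ++ q := by
    apply toWord_of_mk_length huv_mk.symm
    rw [List.length_append, hnorm_uv, hnuA, hpq]
  -- total length is preserved
  have hTT : TT (Φ * ψ) = TT Φ := by
    have hs := sum_eq_off (f := fun k => FreeGroup.norm (Φ (FreeGroup.of k)))
      (g := fun k => FreeGroup.norm ((Φ * ψ) (FreeGroup.of k))) i
      (fun k hk => (congrArg FreeGroup.norm (hoff k hk)).symm)
    have hfi : FreeGroup.norm ((Φ * ψ) (FreeGroup.of i)) = FreeGroup.norm (Φ (FreeGroup.of i)) := by
      rw [← hz_def, hnormz, hnorm_uv, hu_eq, norm_bp]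
    simp only [TT]
    omega
  -- secondary measure comparison at index i
  have hMM := h2 ψ hψ hTT
  have hμ : rnk (code n) (2 * n + 2) (HH (Φ (FreeGroup.of i)))
        + rnk (code n) (2 * n + 2) (HH ((Φ (FreeGroup.of i))⁻¹))
      ≤ rnk (code n) (2 * n + 2) (HH z) + rnk (code n) (2 * n + 2) (HH z⁻¹) := by
    have hs := sum_eq_off
      (f := fun k => rnk (code n) (2 * n + 2) (HH (Φ (FreeGroup.of k)))
        + rnk (code n) (2 * n + 2) (HH ((Φ (FreeGroup.of k))⁻¹)))
      (g := fun k => rnk (code n) (2 * n + 2) (HH ((Φ * ψ) (FreeGroup.of k)))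
        + rnk (code n) (2 * n + 2) (HH (((Φ * ψ) (FreeGroup.of k))⁻¹))) i
      (fun k hk => by simp only [hoff k hk])
    simp only [MM] at hMM
    rw [← hz_def] at hs
    omega
  -- rewrite both sides of hμ
  have hsum_u : rnk (code n) (2 * n + 2) (HH (Φ (FreeGroup.of i)))
        + rnk (code n) (2 * n + 2) (HH ((Φ (FreeGroup.of i))⁻¹))
      = rnk (code n) (2 * n + 2) (HH u) + rnk (code n) (2 * n + 2) (HH u⁻¹) := by
    cases ε
    · rw [hu_eq]; simp only [bp_false, inv_inv]; omega
    · rw [hu_eq]; simp only [bp_true]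
  have hsum_z : rnk (code n) (2 * n + 2) (HH z) + rnk (code n) (2 * n + 2) (HH z⁻¹)
      = rnk (code n) (2 * n + 2) (HH (u * v)) + rnk (code n) (2 * n + 2) (HH (u * v)⁻¹) := by
    rcases hz with h | h <;> rw [h]
    · rw [inv_inv]; omega
  rw [hsum_u, hsum_z] at hμ
  -- compute the HH's
  have hcu_le : (FreeGroup.norm u + 1) / 2 ≤ A.length := by omega
  have hm_le_cu : p.length ≤ (FreeGroup.norm u + 1) / 2 := by omega
  have hHHu : HH u = A.take ((FreeGroup.norm u + 1) / 2) := by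
    rw [HH, ← hA, take_append_of_le hcu_le]
  have hHHuv : HH (u * v) = A.take ((FreeGroup.norm u + 1) / 2) := by
    rw [HH, htoword_uv, hnorm_uv, take_append_of_le hcu_le]
  have hHHuinv : HH u⁻¹
      = p ++ (invRev A).take ((FreeGroup.norm u + 1) / 2 - p.length) := by
    rw [HH, FreeGroup.toWord_inv, FreeGroup.norm_inv_eq, ← hA, invRev_append,
      FreeGroup.invRev_invRev, take_append_of_ge hm_le_cu]
  have hHHuvinv : HH (u * v)⁻¹
      = invRev q ++ (invRev A).take ((FreeGroup.norm u + 1) / 2 - p.length) := by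
    rw [HH, FreeGroup.toWord_inv, FreeGroup.norm_inv_eq, htoword_uv, hnorm_uv, invRev_append,
      take_append_of_ge (by rw [FreeGroup.invRev_length, ← hpq]; exact hm_le_cu)]
    rw [FreeGroup.invRev_length, ← hpq]
  rw [hHHu, hHHuv, hHHuinv, hHHuvinv] at hμ
  have hru : rnk (code n) (2 * n + 2) (p ++ (invRev A).take ((FreeGroup.norm u + 1) / 2 - p.length))
      ≤ rnk (code n) (2 * n + 2)
        (invRev q ++ (invRev A).take ((FreeGroup.norm u + 1) / 2 - p.length)) := by omega
  have hrpq : rnk (code n) (2 * n + 2) p ≤ rnk (code n) (2 * n + 2) (invRev q) :=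
    rnk_append_le (code n) (2 * n + 2) (by omega)
      (by rw [FreeGroup.invRev_length, hpq]) hru
  ----------------------------------------------------------------
  -- the w-side move
  ----------------------------------------------------------------
  obtain ⟨ψ', hψ', hoff', hz'⟩ := exists_move Φ kk j hkj (!ζ) (!δ)
  have hz'form : (Φ * ψ') (FreeGroup.of kk) = (v * w)⁻¹ ∨ (Φ * ψ') (FreeGroup.of kk) = v * w := by
    have hbp : bp (Φ (FreeGroup.of kk)) (!ζ) * bp (Φ (FreeGroup.of j)) (!δ) = (v * w)⁻¹ := by
      rw [hw_eq, hv_eq, mul_inv_rev, bp_inv, bp_inv]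
    rcases hz' with h | h
    · exact Or.inl (by rw [h, hbp])
    · exact Or.inr (by rw [h, hbp, inv_inv])
  set z' := (Φ * ψ') (FreeGroup.of kk) with hz'_def
  have hvw_mk : v * w = FreeGroup.mk (p ++ C) := by
    have : v * w = FreeGroup.mk (p ++ (q ++ (invRev q ++ C))) := by
      rw [← FreeGroup.mk_toWord (x := v), ← FreeGroup.mk_toWord (x := w), FreeGroup.mul_mk,
        hv_split, ← hC]
      congr 1
      simp
    rw [this]
    exact mk_cancel_middle p q C
  have hnormz' : FreeGroup.norm z' = FreeGroup.norm (v * w) := by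
    rcases hz'form with h | h <;> rw [h]
    rw [FreeGroup.norm_inv_eq]
  have hle' : FreeGroup.norm (v * w) ≤ FreeGroup.norm w := by
    calc FreeGroup.norm (v * w) ≤ (p ++ C).length := by
          rw [hvw_mk]; exact FreeGroup.norm_mk_le
      _ = FreeGroup.norm w := by rw [List.length_append, hnwC]
  have hge' : FreeGroup.norm w ≤ FreeGroup.norm z' := by
    have h' := entry_ge h1 hψ' kk hoff'
    rw [← hz'_def] at h'
    calc FreeGroup.norm w = FreeGroup.norm (Φ (FreeGroup.of kk)) := by rw [hw_eq, norm_bp]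
      _ ≤ FreeGroup.norm z' := h'
  have hnorm_vw : FreeGroup.norm (v * w) = FreeGroup.norm w := by omega
  have htoword_vw : (v * w).toWord = p ++ C := by
    apply toWord_of_mk_length hvw_mk.symm
    rw [List.length_append, hnorm_vw, hnwC]
  have hTT' : TT (Φ * ψ') = TT Φ := by
    have hs := sum_eq_off (f := fun k => FreeGroup.norm (Φ (FreeGroup.of k)))
      (g := fun k => FreeGroup.norm ((Φ * ψ') (FreeGroup.of k))) kk
      (fun k hk => (congrArg FreeGroup.norm (hoff' k hk)).symm)
    have hfi : FreeGroup.norm ((Φ * ψ') (FreeGroup.of kk))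
        = FreeGroup.norm (Φ (FreeGroup.of kk)) := by
      rw [← hz'_def, hnormz', hnorm_vw, hw_eq, norm_bp]
    simp only [TT]
    omega
  have hMM' := h2 ψ' hψ' hTT'
  have hμ' : rnk (code n) (2 * n + 2) (HH (Φ (FreeGroup.of kk)))
        + rnk (code n) (2 * n + 2) (HH ((Φ (FreeGroup.of kk))⁻¹))
      ≤ rnk (code n) (2 * n + 2) (HH z') + rnk (code n) (2 * n + 2) (HH z'⁻¹) := by
    have hs := sum_eq_off
      (f := fun k => rnk (code n) (2 * n + 2) (HH (Φ (FreeGroup.of k)))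
        + rnk (code n) (2 * n + 2) (HH ((Φ (FreeGroup.of k))⁻¹)))
      (g := fun k => rnk (code n) (2 * n + 2) (HH ((Φ * ψ') (FreeGroup.of k)))
        + rnk (code n) (2 * n + 2) (HH (((Φ * ψ') (FreeGroup.of k))⁻¹))) kk
      (fun k hk => by simp only [hoff' k hk])
    simp only [MM] at hMM'
    rw [← hz'_def] at hs
    omega
  have hsum_w : rnk (code n) (2 * n + 2) (HH (Φ (FreeGroup.of kk)))
        + rnk (code n) (2 * n + 2) (HH ((Φ (FreeGroup.of kk))⁻¹))
      = rnk (code n) (2 * n + 2) (HH w) + rnk (code n) (2 * n + 2) (HH w⁻¹) := by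
    cases ζ
    · rw [hw_eq]; simp only [bp_false, inv_inv]; omega
    · rw [hw_eq]; simp only [bp_true]
  have hsum_z' : rnk (code n) (2 * n + 2) (HH z') + rnk (code n) (2 * n + 2) (HH z'⁻¹)
      = rnk (code n) (2 * n + 2) (HH (v * w)) + rnk (code n) (2 * n + 2) (HH (v * w)⁻¹) := by
    rcases hz'form with h | h <;> rw [h]
    · rw [inv_inv]; omega
  rw [hsum_w, hsum_z'] at hμ'
  have hm_le_cw : p.length ≤ (FreeGroup.norm w + 1) / 2 := by omega
  have hcw_le : (FreeGroup.norm w + 1) / 2 ≤ C.length := by omega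
  have hHHw : HH w = invRev q ++ C.take ((FreeGroup.norm w + 1) / 2 - p.length) := by
    rw [HH, ← hC, take_append_of_ge (by rw [FreeGroup.invRev_length, ← hpq]; exact hm_le_cw)]
    rw [FreeGroup.invRev_length, ← hpq]
  have hHHvw : HH (v * w) = p ++ C.take ((FreeGroup.norm w + 1) / 2 - p.length) := by
    rw [HH, htoword_vw, hnorm_vw, take_append_of_ge hm_le_cw]
  have hHHwinv : HH w⁻¹ = (invRev C).take ((FreeGroup.norm w + 1) / 2) := by
    rw [HH, FreeGroup.toWord_inv, FreeGroup.norm_inv_eq, ← hC, invRev_append,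
      take_append_of_le (by rw [FreeGroup.invRev_length]; exact hcw_le)]
  have hHHvwinv : HH (v * w)⁻¹ = (invRev C).take ((FreeGroup.norm w + 1) / 2) := by
    rw [HH, FreeGroup.toWord_inv, FreeGroup.norm_inv_eq, htoword_vw, hnorm_vw, invRev_append,
      take_append_of_le (by rw [FreeGroup.invRev_length]; exact hcw_le)]
  rw [hHHw, hHHvw, hHHwinv, hHHvwinv] at hμ'
  have hrw : rnk (code n) (2 * n + 2)
        (invRev q ++ C.take ((FreeGroup.norm w + 1) / 2 - p.length))
      ≤ rnk (code n) (2 * n + 2)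
        (p ++ C.take ((FreeGroup.norm w + 1) / 2 - p.length)) := by omega
  have hrqp : rnk (code n) (2 * n + 2) (invRev q) ≤ rnk (code n) (2 * n + 2) p :=
    rnk_append_le (code n) (2 * n + 2) (by omega)
      (by rw [FreeGroup.invRev_length, hpq]) hrw
  -- combine
  have heq : rnk (code n) (2 * n + 2) p = rnk (code n) (2 * n + 2) (invRev q) := by omega
  have hpinv : p = invRev q :=
    rnk_inj (code n) (2 * n + 2) code_lt code_inj p (invRev q)
      (by rw [FreeGroup.invRev_length, hpq]) heq
  apply hq_ne
  rw [hpinv, FreeGroup.invRev_invRev]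

end NielsenProof
namespace NielsenProof

open FreeGroup

variable {n : ℕ}

/-- `s` is a prefix of `u` cancellable by some left neighbour -/
def mL (Φ : MulAut (FreeGroup (Fin n))) (s : List (Fin n × Bool)) (u : FreeGroup (Fin n)) : Prop :=
  s <+: u.toWord ∧ (s = [] ∨ ∃ v ∈ Upm Φ, v * u ≠ 1 ∧ invRev s <:+ v.toWord)

/-- `s` is a suffix of `u` cancellable by some right neighbour -/
def mR (Φ : MulAut (FreeGroup (Fin n))) (s : List (Fin n × Bool)) (u : FreeGroup (Fin n)) : Prop :=
  s <:+ u.toWord ∧ (s = [] ∨ ∃ w ∈ Upm Φ, u * w ≠ 1 ∧ invRev s <+: w.toWord)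

theorem suffix_of_suffix_le {β : Type*} {s₁ s₂ X : List β} (h1 : s₁ <:+ X) (h2 : s₂ <:+ X)
    (h : s₁.length ≤ s₂.length) : s₁ <:+ s₂ := by
  have e1 := List.suffix_iff_eq_drop.mp h1
  have e2 := List.suffix_iff_eq_drop.mp h2
  have l1 := h1.length_le
  have l2 := h2.length_le
  rw [e1, e2]
  rw [show X.length - s₁.length = (X.length - s₂.length) + (s₂.length - s₁.length) by omega,
    ← List.drop_drop]
  exact List.drop_suffix _ _

theorem tri {Φ : MulAut (FreeGroup (Fin n))} (h1 : Min1 Φ) (h2 : Min2 Φ)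
    {u : FreeGroup (Fin n)} (hu : u ∈ Upm Φ) {pl s : List (Fin n × Bool)}
    (hp : mL Φ pl u) (hs : mR Φ s u) : pl.length + s.length < FreeGroup.norm u := by
  have hnu := Upm_norm_pos hu
  rcases hp.2 with hpl0 | ⟨v, hv, hvu, hinv⟩
  · rcases hs.2 with hs0 | ⟨w, hw, huw, hinw⟩
    · rw [hpl0, hs0]; simpa using hnu
    · have := matchable_bound h1 hu hw huw hs.1 hinw
      rw [hpl0]
      simp only [List.length_nil, Nat.zero_add]
      omega
  · have hplb : 2 * pl.length ≤ FreeGroup.norm u := by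
      have := matchable_bound h1 hv hu hvu (s := invRev pl) hinv
        (by rw [FreeGroup.invRev_invRev]; exact hp.1)
      rw [FreeGroup.invRev_length] at this
      exact this.2
    rcases hs.2 with hs0 | ⟨w, hw, huw, hinw⟩
    · rw [hs0]
      simp only [List.length_nil, Nat.add_zero]
      omega
    · have hsb : 2 * s.length ≤ FreeGroup.norm u :=
        (matchable_bound h1 hu hw huw hs.1 hinw).1
      by_contra hcon
      push_neg at hcon
      -- then everything is exactly half and u.toWord = pl ++ s
      have hhalf : 2 * pl.length = FreeGroup.norm u ∧ 2 * s.length = FreeGroup.norm u := by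
        have hple := hp.1.length_le
        have hsle := hs.1.length_le
        rw [FreeGroup.norm] at *
        omega
      have hsplit : u.toWord = pl ++ s := by
        have hpt := List.prefix_iff_eq_take.mp hp.1
        have hst' := List.suffix_iff_eq_drop.mp hs.1
        have hidx : u.toWord.length - s.length = pl.length := by
          rw [FreeGroup.norm] at hhalf; omega
        rw [hidx] at hst'
        conv_lhs => rw [← List.take_append_drop pl.length u.toWord]
        rw [← hpt, ← hst']
      exact no_half h1 h2 hv hu hw hvu huw hsplit (by omega) hinv hinw

theorem key_lemma {Φ : MulAut (FreeGroup (Fin n))} (h1 : Min1 Φ) (h2 : Min2 Φ) :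
    ∀ (us : List (FreeGroup (Fin n))) (u : FreeGroup (Fin n)),
    (∀ x ∈ us, x ∈ Upm Φ) → u ∈ Upm Φ →
    List.Chain' (fun a b => a * b ≠ 1) (us ++ [u]) →
    ∃ z t pl, ((us ++ [u]).prod).toWord = z ++ t ∧ t <:+ u.toWord ∧ mL Φ pl u ∧
      t.length + pl.length = FreeGroup.norm u ∧
      us.length + t.length ≤ FreeGroup.norm ((us ++ [u]).prod) := by
  intro us
  induction us using List.reverseRecOn with
  | nil =>
    intro u _ hu _
    refine ⟨[], u.toWord, [], by simp, List.suffix_refl _, ⟨List.nil_prefix, Or.inl rfl⟩, ?_, ?_⟩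
    · simp [FreeGroup.norm]
    · simp [FreeGroup.norm]
  | append_singleton us' u' ih =>
    intro w hall hw hch
    have hu' : u' ∈ Upm Φ := hall u' (by simp)
    have hall' : ∀ x ∈ us', x ∈ Upm Φ := fun x hx => hall x (by simp [hx])
    have hch' : List.Chain' (fun a b => a * b ≠ 1) (us' ++ [u']) :=
      hch.prefix ⟨[w], by simp⟩
    have hu'w : u' * w ≠ 1 := by
      have hsuf : [u', w] <:+ ((us' ++ [u']) ++ [w]) := ⟨us', by simp⟩
      have := hch.suffix hsuf
      exact (List.isChain_cons_cons.mp this).1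
    obtain ⟨z, t, pl, hword, ht, hmL, hlen, hnorm⟩ := ih u' hall' hu' hch'
    set P0 := (us' ++ [u']).prod with hP0
    have ht_ne : t ≠ [] := by
      intro h0
      have := tri h1 h2 hu' hmL (s := []) ⟨List.nil_suffix, Or.inl rfl⟩
      rw [h0] at hlen
      simp at hlen this
      omega
    obtain ⟨a2, d, g2, hPd, hwd, hprodw⟩ := cancel P0 w
    have htsuf : t <:+ P0.toWord := by rw [hword]; exact ⟨z, rfl⟩
    have hdsuf : d <:+ P0.toWord := by rw [hPd]; exact ⟨a2, rfl⟩
    have hd_lt : d.length < t.length := by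
      by_contra hge
      push_neg at hge
      have htd : t <:+ d := suffix_of_suffix_le htsuf hdsuf hge
      obtain ⟨d0, hd0⟩ := htd
      have hinvt : invRev t <+: w.toWord := by
        have h1' : invRev t <+: invRev d := by
          rw [← hd0, invRev_append]; exact ⟨invRev d0, rfl⟩
        exact h1'.trans ⟨g2, hwd.symm⟩
      have hmRt : mR Φ t u' := ⟨ht, Or.inr ⟨w, hw, hu'w, hinvt⟩⟩
      have := tri h1 h2 hu' hmL hmRt
      omega
    have hd_suf_t : d <:+ t := suffix_of_suffix_le hdsuf htsuf (by omega)
    have hprod_app : ((us' ++ [u']) ++ [w]).prod = P0 * w := by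
      rw [List.prod_append, List.prod_cons, List.prod_nil, mul_one]
    refine ⟨a2, g2, invRev d, ?_, ⟨invRev d, hwd.symm⟩, ?_, ?_, ?_⟩
    · rw [hprod_app, hprodw]
    · refine ⟨⟨g2, hwd.symm⟩, Or.inr ⟨u', hu', hu'w, ?_⟩⟩
      rw [FreeGroup.invRev_invRev]
      exact hd_suf_t.trans ht
    · have : FreeGroup.norm w = (invRev d).length + g2.length := by
        rw [FreeGroup.norm, hwd, List.length_append]
      omega
    · have hP0len : FreeGroup.norm P0 = a2.length + d.length := by
        rw [FreeGroup.norm, hPd, List.length_append]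
      have hnew : FreeGroup.norm (((us' ++ [u']) ++ [w]).prod) = a2.length + g2.length := by
        rw [hprod_app, FreeGroup.norm, hprodw, List.length_append]
      rw [hnew]
      simp only [List.length_append, List.length_singleton]
      omega

theorem chain_norm_ge {Φ : MulAut (FreeGroup (Fin n))} (h1 : Min1 Φ) (h2 : Min2 Φ)
    {us : List (FreeGroup (Fin n))} (hne : us ≠ []) (hall : ∀ x ∈ us, x ∈ Upm Φ)
    (hch : List.Chain' (fun a b => a * b ≠ 1) us) :
    us.length ≤ FreeGroup.norm us.prod := by
  rcases List.eq_nil_or_concat us with h0 | ⟨us', u, hus⟩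
  · exact absurd h0 hne
  rw [List.concat_eq_append] at hus
  subst hus
  obtain ⟨z, t, pl, hword, ht, hmL, hlen, hnorm⟩ := key_lemma h1 h2 us' u
    (fun x hx => hall x (by simp [hx])) (hall u (by simp)) hch
  have ht_ne : 0 < t.length := by
    have := tri h1 h2 (hall u (by simp)) hmL (s := []) ⟨List.nil_suffix, Or.inl rfl⟩
    simp at this
    omega
  simp only [List.length_append, List.length_singleton]
  omega

end NielsenProof
namespace NielsenProof

open FreeGroup

variable {n : ℕ}

theorem bp_of_eq_mk (x : Fin n) (b : Bool) :
    bp (FreeGroup.of x) b = FreeGroup.mk [(x, b)] := by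
  cases b
  · show (FreeGroup.of x)⁻¹ = _
    rw [show FreeGroup.of x = FreeGroup.mk [(x, true)] from rfl, FreeGroup.inv_mk]
    congr 1
  · rfl

theorem prod_mkLetter : ∀ L : List (Fin n × Bool),
    (L.map (fun l => bp (FreeGroup.of l.1) l.2)).prod = FreeGroup.mk L := by
  intro L
  induction L with
  | nil => rw [List.map_nil, List.prod_nil, ← FreeGroup.one_eq_mk]
  | cons l L ih =>
    rw [List.map_cons, List.prod_cons, ih, bp_of_eq_mk, FreeGroup.mul_mk]
    rfl

theorem exists_min (φ : MulAut (FreeGroup (Fin n))) :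
    ∃ ψ ∈ G n, Min1 (φ * ψ) ∧ Min2 (φ * ψ) := by
  classical
  set Tset : Set ℕ := {t | ∃ ψ ∈ G n, TT (φ * ψ) = t} with hTset
  have hTne : Tset.Nonempty := ⟨TT (φ * 1), 1, one_mem _, rfl⟩
  obtain ⟨ψ₀, hψ₀, hT₀⟩ := Nat.sInf_mem hTne
  set Mset : Set ℕ := {m | ∃ ψ ∈ G n, TT (φ * ψ) = sInf Tset ∧ MM (φ * ψ) = m} with hMset
  have hMne : Mset.Nonempty := ⟨MM (φ * ψ₀), ψ₀, hψ₀, hT₀, rfl⟩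
  obtain ⟨ψ₁, hψ₁, hT₁, hM₁⟩ := Nat.sInf_mem hMne
  refine ⟨ψ₁, hψ₁, ?_, ?_⟩
  · intro χ hχ
    have hmem : TT (φ * ψ₁ * χ) ∈ Tset := ⟨ψ₁ * χ, mul_mem hψ₁ hχ, by rw [mul_assoc]⟩
    have := Nat.sInf_le hmem
    omega
  · intro χ hχ hTTeq
    have hmem : MM (φ * ψ₁ * χ) ∈ Mset :=
      ⟨ψ₁ * χ, mul_mem hψ₁ hχ, by rw [← mul_assoc, hTTeq, hT₁], by rw [mul_assoc]⟩
    have := Nat.sInf_le hmem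
    omega

theorem norms_eq_one {Φ : MulAut (FreeGroup (Fin n))} (h1 : Min1 Φ) (h2 : Min2 Φ) :
    ∀ i : Fin n, FreeGroup.norm (Φ (FreeGroup.of i)) = 1 := by
  classical
  -- every generator is (the image of a generator)^{±1}
  have key : ∀ j : Fin n, ∃ i : Fin n, ∃ b : Bool,
      FreeGroup.of j = bp (Φ (FreeGroup.of i)) b := by
    intro j
    set h := Φ.symm (FreeGroup.of j) with hh
    have hne : h ≠ 1 := by
      intro h0
      have : FreeGroup.of j = (1 : FreeGroup (Fin n)) := by
        have := congrArg Φ h0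
        simpa [hh] using this
      exact FreeGroup.of_ne_one j this
    have hw_ne : h.toWord ≠ [] := fun h0 => hne (FreeGroup.toWord_eq_nil_iff.mp h0)
    set us : List (FreeGroup (Fin n))
      := h.toWord.map (fun l => Φ (bp (FreeGroup.of l.1) l.2)) with hus
    have hprod : us.prod = FreeGroup.of j := by
      have h1' : us = (h.toWord.map (fun l => bp (FreeGroup.of l.1) l.2)).map Φ := by
        rw [hus, List.map_map]; rfl
      rw [h1', ← map_list_prod Φ, prod_mkLetter,
        FreeGroup.mk_toWord]
      simp [hh]
    have hall : ∀ x ∈ us, x ∈ Upm Φ := by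
      intro x hx
      rw [hus] at hx
      obtain ⟨l, _, rfl⟩ := List.mem_map.mp hx
      exact ⟨l.1, l.2, map_bp Φ _ _⟩
    have hch : List.Chain' (fun a b => a * b ≠ 1) us := by
      rw [hus, List.Chain', List.isChain_map]
      have hred : Reduced h.toWord := reduced_toWord h
      apply List.IsChain.imp ?_ hred
      intro a b hab
      intro hcon
      rw [← _root_.map_mul] at hcon
      have h0 : bp (FreeGroup.of a.1) a.2 * bp (FreeGroup.of b.1) b.2 = 1 := by
        have := congrArg Φ.symm hcon
        simpa using this
      rw [bp_of_eq_mk, bp_of_eq_mk, FreeGroup.mul_mk] at h0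
      have hred2 : Reduced ([(a.1, a.2)] ++ [(b.1, b.2)]) := by
        simp only [List.singleton_append]
        refine List.isChain_cons_cons.mpr ⟨?_, List.isChain_singleton _⟩
        exact hab
      have h3 := congrArg FreeGroup.toWord h0
      rw [FreeGroup.toWord_mk, reduce_eq_self_of_reduced hred2, FreeGroup.toWord_one] at h3
      simp at h3
    have hlen := chain_norm_ge h1 h2 (by
      rw [hus]
      intro h0
      exact hw_ne (List.map_eq_nil_iff.mp h0)) hall hch
    rw [hprod] at hlen
    have hus_len : us.length = h.toWord.length := by rw [hus, List.length_map]
    have hone : h.toWord.length = 1 := by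
      have h3 : 0 < h.toWord.length := List.length_pos_iff.mpr hw_ne
      have : FreeGroup.norm (FreeGroup.of j) = 1 := FreeGroup.norm_of j
      omega
    obtain ⟨l, hl⟩ := List.length_eq_one_iff.mp hone
    refine ⟨l.1, l.2, ?_⟩
    rw [← hprod, hus, hl]
    simp [map_bp]
  -- injectivity of the index assignment
  choose idx sgn hrep using key
  have hinj : Function.Injective idx := by
    intro j j' hjj
    have e1 := hrep j
    have e2 := hrep j'
    rw [← hjj] at e2
    by_cases hb : sgn j = sgn j'
    · rw [← hb] at e2
      have : FreeGroup.of j = FreeGroup.of j' := by rw [e1, e2]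
      exact FreeGroup.of_injective this
    · exfalso
      have hbb : sgn j' = !(sgn j) := by
        revert hb
        cases sgn j <;> cases sgn j' <;> decide
      rw [hbb, ← bp_inv, ← e1] at e2
      have := congrArg FreeGroup.toWord e2
      rw [FreeGroup.toWord_of, FreeGroup.toWord_inv, FreeGroup.toWord_of] at this
      simp [invRev_singleton] at this
  have hsurj : Function.Surjective idx := Finite.surjective_of_injective hinj
  intro i
  obtain ⟨j, rfl⟩ := hsurj i
  have := hrep j
  cases hs : sgn j <;> rw [hs] at this
  · rw [bp_false] at this
    have : Φ (FreeGroup.of (idx j)) = (FreeGroup.of j)⁻¹ := by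
      rw [this, inv_inv]
    rw [this, FreeGroup.norm_inv_eq, FreeGroup.norm_of]
  · rw [bp_true] at this
    rw [← this, FreeGroup.norm_of]

end NielsenProof
namespace NielsenProof

open FreeGroup

variable {n : ℕ}

/-- inversion of a set of generators -/
def fAutOn (T : Finset (Fin n)) : MulAut (FreeGroup (Fin n)) :=
  mkAut (fun k => if k ∈ T then (FreeGroup.of k)⁻¹ else FreeGroup.of k)
    (fun k => if k ∈ T then (FreeGroup.of k)⁻¹ else FreeGroup.of k)
    (by
      intro k
      by_cases hk : k ∈ T
      · simp [hk]
      · simp [hk])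
    (by
      intro k
      by_cases hk : k ∈ T
      · simp [hk]
      · simp [hk])

@[simp] theorem fAutOn_apply_of (T : Finset (Fin n)) (k : Fin n) :
    fAutOn T (FreeGroup.of k) = if k ∈ T then (FreeGroup.of k)⁻¹ else FreeGroup.of k := by
  simp [fAutOn]

theorem fAutOn_mem (T : Finset (Fin n)) : fAutOn T ∈ G n := by
  classical
  induction T using Finset.induction_on with
  | empty =>
    have h : fAutOn (∅ : Finset (Fin n)) = 1 := mulAut_ext (fun i => by simp)
    rw [h]; exact one_mem _
  | @insert a T ha ih =>
    have h : fAutOn (insert a T) = iAut a * fAutOn T := by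
      apply mulAut_ext
      intro k
      rw [MulAut.mul_apply, fAutOn_apply_of, fAutOn_apply_of]
      by_cases hk : k ∈ T
      · have hka : k ≠ a := fun h => ha (h ▸ hk)
        simp [hk, hka, Finset.mem_insert]
      · by_cases hk2 : k = a
        · subst hk2
          simp [hk, ha]
        · simp [hk, hk2, Finset.mem_insert]
    rw [h]
    exact mul_mem (iAut_mem a) ih

/-- permutation automorphism -/
def pAut (e : Equiv.Perm (Fin n)) : MulAut (FreeGroup (Fin n)) :=
  FreeGroup.freeGroupCongr e

@[simp] theorem pAut_apply_of (e : Equiv.Perm (Fin n)) (k : Fin n) :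
    pAut e (FreeGroup.of k) = FreeGroup.of (e k) := by
  simp [pAut]

theorem pAut_mem (e : Equiv.Perm (Fin n)) : pAut e ∈ G n := by
  refine Equiv.Perm.swap_induction_on e ?_ ?_
  · have h : pAut (1 : Equiv.Perm (Fin n)) = 1 := mulAut_ext (fun i => by simp)
    rw [h]; exact one_mem _
  · intro f x y hxy hf
    have h : pAut (Equiv.swap x y * f) = pAut (Equiv.swap x y) * pAut f := by
      apply mulAut_ext
      intro k
      simp [MulAut.mul_apply, Equiv.Perm.mul_apply]
    rw [h]
    refine mul_mem ?_ hf
    apply Subgroup.subset_closure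
    exact Or.inl ⟨x, y, fun k => by simp⟩

theorem main_result (φ : MulAut (FreeGroup (Fin n))) : φ ∈ G n := by
  classical
  obtain ⟨ψ, hψ, h1, h2⟩ := exists_min φ
  set Φ := φ * ψ with hΦdef
  have hn1 := norms_eq_one h1 h2
  have hrep : ∀ i, ∃ l : Fin n × Bool, Φ (FreeGroup.of i) = bp (FreeGroup.of l.1) l.2 := by
    intro i
    obtain ⟨l, hl⟩ := List.length_eq_one_iff.mp (hn1 i)
    refine ⟨l, ?_⟩
    rw [← FreeGroup.mk_toWord (x := Φ (FreeGroup.of i)), hl, ← bp_of_eq_mk]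
  choose lt hlt using hrep
  have hinj : Function.Injective (fun i => (lt i).1) := by
    intro i i' hii
    simp only at hii
    by_cases hb : (lt i).2 = (lt i').2
    · have : Φ (FreeGroup.of i) = Φ (FreeGroup.of i') := by
        rw [hlt i, hlt i', hii, hb]
      have := Φ.injective this
      exact FreeGroup.of_injective this
    · exfalso
      have hbb : (lt i').2 = !((lt i).2) := by
        revert hb
        cases (lt i).2 <;> cases (lt i').2 <;> decide
      have h3 : Φ (FreeGroup.of i') = (Φ (FreeGroup.of i))⁻¹ := by
        rw [hlt i, hlt i', hii, hbb, ← bp_inv]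
      have h4 : FreeGroup.of i' = (FreeGroup.of i)⁻¹ := by
        apply Φ.injective
        rw [h3]
        exact (_root_.map_inv Φ (FreeGroup.of i)).symm
      have := congrArg FreeGroup.toWord h4
      rw [FreeGroup.toWord_of, FreeGroup.toWord_inv, FreeGroup.toWord_of] at this
      simp [invRev_singleton] at this
  set σe := Equiv.ofBijective _ (Finite.injective_iff_bijective.mp hinj) with hσe
  set T : Finset (Fin n) := Finset.univ.filter (fun i => (lt i).2 = false) with hT
  have hΦeq : Φ = pAut σe * fAutOn T := by
    apply mulAut_ext
    intro i
    rw [hlt i, MulAut.mul_apply, fAutOn_apply_of]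
    by_cases hη : (lt i).2 = false
    · have hiT : i ∈ T := by simp [hT, hη]
      rw [if_pos hiT, _root_.map_inv, pAut_apply_of, hη, bp_false]
      rfl
    · have hiT : i ∉ T := by simp [hT, hη]
      have hη' : (lt i).2 = true := by revert hη; cases (lt i).2 <;> decide
      rw [if_neg hiT, pAut_apply_of, hη', bp_true]
      rfl
  have hΦmem : Φ ∈ G n := by
    rw [hΦeq]
    exact mul_mem (pAut_mem σe) (fAutOn_mem T)
  have hφ : φ = Φ * ψ⁻¹ := by
    rw [hΦdef, mul_inv_cancel_right]
  rw [hφ]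
  exact mul_mem hΦmem (inv_mem hψ)

end NielsenProof

/-- Every automorphism of the free group `F_n` is a finite composition of
elementary Nielsen transformations. -/
theorem nielsen_reduction (n : ℕ) (φ : MulAut (FreeGroup (Fin n))) :
    φ ∈ Subgroup.closure {ψ : MulAut (FreeGroup (Fin n)) | IsElementaryNielsen ψ} :=
  NielsenProof.main_result φ
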